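/- Let K(t) ∈ ℤ⟦t⟧ be the power series whose coefficient of t^n is the number of lists of n integers, each belonging to {−2, −1, 0, 1, 2}, all of whose prefix sums are ≥ 0 (nonnegative meanders). Then t²(5t − 1)²K⁴ + t(5t − 1)²K³ + 3t(5t − 1)K² + (5t − 1)K + 1 = 0 in ℤ⟦t⟧. -/

import Mathlib

open PowerSeries

abbrev SS : Set ℤ := {-2, -1, 0, 1, 2}

def WkP (m e : ℤ) (n : ℕ) (l : List ℤ) : Prop :=
  l.length = n ∧ (∀ x ∈ l, x ∈ SS) ∧
    ((∀ i < l.length, 0 ≤ m + (l.take i).sum) ∧ m + l.sum = e)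

/-- walks from height `m`, staying `≥ 0` strictly before the end, ending at `e`. -/
def Wk (m e : ℤ) (n : ℕ) : Type := {l : List ℤ // WkP m e n l}

lemma SS_finite : SS.Finite := Set.toFinite _

instance SS_fin : Finite ↥SS := SS_finite.to_subtype

instance wk_finite (n : ℕ) (Q : List ℤ → Prop) :
    Finite {l : List ℤ // l.length = n ∧ (∀ x ∈ l, x ∈ SS) ∧ Q l} := by
  apply Finite.of_injective
    (f := fun w : {l : List ℤ // l.length = n ∧ (∀ x ∈ l, x ∈ SS) ∧ Q l} =>
      fun i : Fin n => (⟨w.1.get (Fin.cast w.2.1.symm i),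
        w.2.2.1 _ (w.1.get_mem _)⟩ : ↥SS))
  intro w1 w2 h
  apply Subtype.ext
  apply List.ext_get (by rw [w1.2.1, w2.2.1])
  intro i h1 h2
  have := congrFun h ⟨i, by rw [← w1.2.1]; exact h1⟩
  simpa [Subtype.ext_iff] using this

instance (m e : ℤ) (n : ℕ) : Finite (Wk m e n) := wk_finite n _

noncomputable instance (m e : ℤ) (n : ℕ) : Fintype (Wk m e n) := Fintype.ofFinite _

/-- number of walks -/
noncomputable def fcN (m e : ℤ) (n : ℕ) : ℕ := Nat.card (Wk m e n)

lemma mem_SS_iff {x : ℤ} : x ∈ SS ↔ x = -2 ∨ x = -1 ∨ x = 0 ∨ x = 1 ∨ x = 2 := by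
  simp [SS]

lemma SS_lb {x : ℤ} (h : x ∈ SS) : -2 ≤ x := by
  rcases mem_SS_iff.1 h with h|h|h|h|h <;> omega

lemma fcN_zero (m e : ℤ) : fcN m e 0 = if m = e then 1 else 0 := by
  rcases eq_or_ne m e with h | h
  · subst h
    simp only [if_pos rfl]
    have : Unique (Wk m m 0) := by
      refine ⟨⟨⟨[], by simp [WkP]⟩⟩, ?_⟩
      rintro ⟨l, hl, _⟩
      apply Subtype.ext
      simpa using List.length_eq_zero_iff.1 hl
    exact Nat.card_unique
  · rw [if_neg h]
    have : IsEmpty (Wk m e 0) := by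
      constructor
      rintro ⟨l, hl, _, _, hs⟩
      rw [List.length_eq_zero_iff.1 hl] at hs
      simp at hs
      exact h hs
    exact Nat.card_of_isEmpty

lemma fcN_neg (m e : ℤ) (hm : m < 0) (n : ℕ) (hn : 0 < n) : fcN m e n = 0 := by
  have : IsEmpty (Wk m e n) := by
    constructor
    rintro ⟨l, hl, _, hpre, _⟩
    have := hpre 0 (by omega)
    simp at this
    omega
  exact Nat.card_of_isEmpty

lemma WkP_cons {x : ℤ} {l : List ℤ} {e : ℤ} {n : ℕ} :
    WkP 0 e (n + 1) (x :: l) ↔ x ∈ SS ∧ WkP x e n l := by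
  constructor
  · rintro ⟨hlen, hmem, hpre, hsum⟩
    have hx : x ∈ SS := hmem x (by simp)
    refine ⟨hx, by simpa using hlen, fun y hy => hmem y (by simp [hy]), ?_, by
      simp only [List.sum_cons] at hsum; omega⟩
    intro i hi
    have := hpre (i + 1) (by simpa using Nat.succ_lt_succ hi)
    simpa [List.take_succ_cons, add_assoc] using this
  · rintro ⟨hx, hlen, hmem, hpre, hsum⟩
    refine ⟨by simpa using hlen, ?_, ?_, by simp only [List.sum_cons]; omega⟩
    · intro y hy
      rcases List.mem_cons.1 hy with h | h
      · exact h ▸ hx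
      · exact hmem y h
    · intro i hi
      cases i with
      | zero => simp
      | succ j =>
        have := hpre j (by simpa using Nat.succ_lt_succ_iff.mp hi)
        simpa [List.take_succ_cons, add_assoc] using this

abbrev SF : Finset ℤ := {-2, -1, 0, 1, 2}

lemma mem_SF_iff {x : ℤ} : x ∈ SS ↔ x ∈ SF := by
  simp [SS, SF]

noncomputable def headEquiv (e : ℤ) (n : ℕ) :
    Wk 0 e (n + 1) ≃ Σ x : SF, Wk (x : ℤ) e n where
  toFun w :=
    have hne : w.1 ≠ [] := List.ne_nil_of_length_pos (by rw [w.2.1]; omega)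
    have pf : WkP 0 e (n + 1) (w.1.head hne :: w.1.tail) := by
      rw [List.cons_head_tail hne]; exact w.2
    ⟨⟨w.1.head hne, mem_SF_iff.1 (WkP_cons.1 pf).1⟩, ⟨w.1.tail, (WkP_cons.1 pf).2⟩⟩
  invFun p := ⟨(p.1 : ℤ) :: p.2.1, WkP_cons.2 ⟨mem_SF_iff.2 p.1.2, p.2.2⟩⟩
  left_inv w := Subtype.ext (List.cons_head_tail _)
  right_inv p := rfl

lemma fcN_head (e : ℤ) (n : ℕ) :
    fcN 0 e (n + 1) =
      fcN (-2) e n + fcN (-1) e n + fcN 0 e n + fcN 1 e n + fcN 2 e n := by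
  have h1 : fcN 0 e (n + 1) = Nat.card (Σ x : SF, Wk (x : ℤ) e n) :=
    Nat.card_congr (headEquiv e n)
  rw [h1]
  rw [Nat.card_eq_fintype_card, Fintype.card_sigma]
  rw [Finset.sum_coe_sort SF (fun x => Fintype.card (Wk x e n))]
  show ∑ x ∈ insert (-2) (insert (-1) (insert 0 (insert 1 ({2} : Finset ℤ)))),
      Fintype.card (Wk x e n) = _
  rw [Finset.sum_insert (by decide), Finset.sum_insert (by decide),
    Finset.sum_insert (by decide), Finset.sum_insert (by decide),
    Finset.sum_singleton]
  simp only [fcN, Nat.card_eq_fintype_card]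
  omega

lemma WkP_append {m s e : ℤ} {i j : ℕ} {u v : List ℤ} (hm : 0 ≤ m)
    (hu : WkP 0 s i u) (hv : WkP (m + s) e j v) : WkP m e (i + j) (u ++ v) := by
  obtain ⟨hul, hum, hup, hus⟩ := hu
  obtain ⟨hvl, hvm, hvp, hvs⟩ := hv
  simp only [zero_add] at hus
  refine ⟨by simp [hul, hvl], ?_, ?_, ?_⟩
  · intro y hy
    rcases List.mem_append.1 hy with h | h
    · exact hum y h
    · exact hvm y h
  · intro j' hj'
    rw [List.take_append, List.sum_append]
    rcases lt_or_ge j' i with hlt | hle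
    · rw [Nat.sub_eq_zero_of_le (by omega : j' ≤ u.length)]
      have := hup j' (by omega)
      simp only [List.take_zero, List.sum_nil] at *
      omega
    · have hju : u.take j' = u := List.take_of_length_le (by omega)
      rw [hju, hus]
      rcases Nat.eq_or_lt_of_le hle with heq | hlt2
      · have : j' - u.length = 0 := by omega
        rw [this]
        have h0 : 0 < v.length := by
          simp only [List.length_append, hul, hvl] at hj'
          omega
        have := hvp 0 h0
        simp only [List.take_zero, List.sum_nil] at *
        omega
      · have := hvp (j' - u.length) (by
          simp only [List.length_append, hul, hvl] at hj'
          omega)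
        omega
  · rw [List.sum_append]
    omega

lemma fp_half {u1 v1 u2 v2 : List ℤ} (h : u1 ++ v1 = u2 ++ v2)
    (s1 : u1.sum < 0)
    (p2 : ∀ i < u2.length, 0 ≤ (u2.take i).sum)
    (hlt : u1.length < u2.length) : False := by
  have h1 : (u1 ++ v1).take u1.length = u1 := List.take_left
  have h2 : (u2 ++ v2).take u1.length = u2.take u1.length := by
    rw [List.take_append, Nat.sub_eq_zero_of_le (le_of_lt hlt)]
    simp
  have h3 : u2.take u1.length = u1 := by rw [← h2, ← h, h1]
  have := p2 u1.length hlt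
  rw [h3] at this
  omega

lemma fp_unique {u1 v1 u2 v2 : List ℤ} (h : u1 ++ v1 = u2 ++ v2)
    (p1 : ∀ i < u1.length, 0 ≤ (u1.take i).sum) (s1 : u1.sum < 0)
    (p2 : ∀ i < u2.length, 0 ≤ (u2.take i).sum) (s2 : u2.sum < 0) :
    u1 = u2 ∧ v1 = v2 := by
  have hlen : u1.length = u2.length := by
    rcases lt_trichotomy u1.length u2.length with hlt | heq | hlt
    · exact absurd (fp_half h s1 p2 hlt) (by simp)
    · exact heq
    · exact absurd (fp_half h.symm s2 p1 hlt) (by simp)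
  exact ⟨List.append_inj h hlen |>.1, List.append_inj h hlen |>.2⟩

lemma Wk_pre0 {s : ℤ} {i : ℕ} (u : Wk 0 s i) :
    ∀ j < u.1.length, 0 ≤ (u.1.take j).sum := by
  intro j hj
  have := u.2.2.2.1 j hj
  omega

lemma Wk_sum0 {s : ℤ} {i : ℕ} (u : Wk 0 s i) : u.1.sum = s := by
  have := u.2.2.2.2
  omega

noncomputable def glue (m e : ℤ) (hm : 1 ≤ m) (n : ℕ) :
    (Σ i : Fin (n + 1),
      (Wk 0 (-1) i × Wk (m - 1) e (n - i)) ⊕ (Wk 0 (-2) i × Wk (m - 2) e (n - i))) →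
      Wk m e n
  | ⟨i, Sum.inl (u, v)⟩ => ⟨u.1 ++ v.1, by
      have hv : WkP (m + -1) e (n - (i : ℕ)) v.1 := by
        rw [show m + -1 = m - 1 by ring]; exact v.2
      have h := WkP_append (by omega : (0:ℤ) ≤ m) u.2 hv
      rwa [Nat.add_sub_cancel' (by omega : (i : ℕ) ≤ n)] at h⟩
  | ⟨i, Sum.inr (u, v)⟩ => ⟨u.1 ++ v.1, by
      have hv : WkP (m + -2) e (n - (i : ℕ)) v.1 := by
        rw [show m + -2 = m - 2 by ring]; exact v.2
      have h := WkP_append (by omega : (0:ℤ) ≤ m) u.2 hv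
      rwa [Nat.add_sub_cancel' (by omega : (i : ℕ) ≤ n)] at h⟩

lemma glue_bijective (m e : ℤ) (hm : 1 ≤ m) (he : e < 0) (n : ℕ) :
    Function.Bijective (glue m e hm n) := by
  constructor
  · rintro ⟨i, c⟩ ⟨i', c'⟩ h
    rcases c with ⟨u, v⟩ | ⟨u, v⟩ <;> rcases c' with ⟨u', v'⟩ | ⟨u', v'⟩ <;>
      · have hl : u.1 ++ v.1 = u'.1 ++ v'.1 := congrArg Subtype.val h
        have huv := fp_unique hl (Wk_pre0 u) (by rw [Wk_sum0 u]; omega)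
          (Wk_pre0 u') (by rw [Wk_sum0 u']; omega)
        first
        | · have hsum : (-1 : ℤ) = -2 ∨ (-2 : ℤ) = -1 := by
              left
              rw [← Wk_sum0 u, ← Wk_sum0 u', huv.1]
            omega
        | · have hsum : (-2 : ℤ) = -1 := by rw [← Wk_sum0 u, ← Wk_sum0 u', huv.1]
            omega
        | · obtain rfl : i = i' := Fin.ext (by rw [← u.2.1, ← u'.2.1, huv.1])
            simp only [Sigma.mk.inj_iff, heq_eq_eq, Sum.inl.injEq, Sum.inr.injEq,
              Prod.mk.injEq, true_and]
            exact ⟨Subtype.ext huv.1, Subtype.ext huv.2⟩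
  · intro w
    obtain ⟨l, hlen, hmem, hpre, hsum⟩ := w
    have hex : ∃ j, (l.take j).sum < 0 := by
      refine ⟨n, ?_⟩
      rw [List.take_of_length_le (le_of_eq hlen)]
      omega
    set τ := Nat.find hex with hτdef
    have hτ : (l.take τ).sum < 0 := Nat.find_spec hex
    have hmin : ∀ j < τ, 0 ≤ (l.take j).sum := by
      intro j hj
      have := Nat.find_min hex hj
      omega
    have hτn : τ ≤ n := by
      have : (l.take n).sum < 0 := by
        rw [List.take_of_length_le (le_of_eq hlen)]; omega
      exact Nat.find_le this
    have hτpos : 0 < τ := by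
      rcases Nat.eq_zero_or_pos τ with h0 | h
      · rw [h0] at hτ; simp at hτ
      · exact h
    have hn1 : τ - 1 < l.length := by omega
    have hstep : (l.take τ).sum = (l.take (τ - 1)).sum + l[τ - 1] := by
      have := List.sum_take_succ l (τ - 1) hn1
      rwa [show τ - 1 + 1 = τ by omega] at this
    have hgetS : l[τ - 1] ∈ SS := hmem _ (List.getElem_mem _)
    have hs2 : -2 ≤ (l.take τ).sum := by
      have h1 := hmin (τ - 1) (by omega)
      have h2 := SS_lb hgetS
      omega
    have hu : WkP 0 ((l.take τ).sum) τ (l.take τ) := by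
      refine ⟨by simp [List.length_take]; omega, fun y hy => hmem y (List.take_subset _ _ hy),
        ?_, by omega⟩
      intro j hj
      have hjτ : j < τ := by
        simp only [List.length_take] at hj; omega
      rw [List.take_take, min_eq_left (by omega : j ≤ τ)]
      have := hmin j hjτ
      omega
    have hkey : ∀ i' : ℕ, l.take (τ + i') = l.take τ ++ (l.drop τ).take i' := by
      intro i'
      conv_lhs => rw [← List.take_append_drop τ l]
      rw [List.take_append,
        List.take_of_length_le (by rw [List.length_take]; omega),
        List.length_take, min_eq_left (by omega)]
      congr 2
      omega
    have husum : (l.take τ).sum + (l.drop τ).sum = l.sum := by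
      rw [← List.sum_append, List.take_append_drop]
    have hv : WkP (m + (l.take τ).sum) e (n - τ) (l.drop τ) := by
      refine ⟨by simp [hlen], fun y hy => hmem y (List.drop_subset _ _ hy), ?_, by omega⟩
      intro j hj
      have hjn : τ + j < n := by
        simp only [List.length_drop, hlen] at hj; omega
      have h1 := hpre (τ + j) (by omega)
      rw [hkey j, List.sum_append] at h1
      omega
    have hcase : (l.take τ).sum = -1 ∨ (l.take τ).sum = -2 := by omega
    rcases hcase with hc | hc
    · rw [hc] at hu hv
      have hv' : WkP (m - 1) e (n - τ) (l.drop τ) := by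
        rw [show m + -1 = m - 1 by ring] at hv; exact hv
      refine ⟨⟨⟨τ, by omega⟩, Sum.inl (⟨l.take τ, hu⟩, ⟨l.drop τ, hv'⟩)⟩, ?_⟩
      exact Subtype.ext (List.take_append_drop τ l)
    · rw [hc] at hu hv
      have hv' : WkP (m - 2) e (n - τ) (l.drop τ) := by
        rw [show m + -2 = m - 2 by ring] at hv; exact hv
      refine ⟨⟨⟨τ, by omega⟩, Sum.inr (⟨l.take τ, hu⟩, ⟨l.drop τ, hv'⟩)⟩, ?_⟩
      exact Subtype.ext (List.take_append_drop τ l)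

lemma fcN_split (m e : ℤ) (hm : 1 ≤ m) (he : e < 0) (n : ℕ) :
    fcN m e n = ∑ i : Fin (n + 1),
      (fcN 0 (-1) i * fcN (m - 1) e (n - i) + fcN 0 (-2) i * fcN (m - 2) e (n - i)) := by
  have h1 : fcN m e n = Nat.card (Σ i : Fin (n + 1),
      (Wk 0 (-1) i × Wk (m - 1) e (n - i)) ⊕ (Wk 0 (-2) i × Wk (m - 2) e (n - i))) :=
    (Nat.card_congr (Equiv.ofBijective _ (glue_bijective m e hm he n))).symm
  rw [h1, Nat.card_eq_fintype_card, Fintype.card_sigma]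
  apply Finset.sum_congr rfl
  intro i _
  rw [Fintype.card_sum, Fintype.card_prod, Fintype.card_prod]
  simp [fcN, Nat.card_eq_fintype_card]

/-- meanders of length `n` -/
def MT (n : ℕ) : Type :=
  {l : List ℤ //
    l.length = n ∧
    (∀ x ∈ l, x ∈ ({-2, -1, 0, 1, 2} : Set ℤ)) ∧
    (∀ i : ℕ, 0 ≤ (l.take i).sum)}

/-- walks with all proper prefix sums nonnegative -/
def PW (n : ℕ) : Type :=
  {l : List ℤ // l.length = n ∧ (∀ x ∈ l, x ∈ SS) ∧ (∀ i < l.length, 0 ≤ (l.take i).sum)}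

instance (n : ℕ) : Finite (MT n) := wk_finite n _
instance (n : ℕ) : Finite (PW n) := wk_finite n _
noncomputable instance (n : ℕ) : Fintype (MT n) := Fintype.ofFinite _
noncomputable instance (n : ℕ) : Fintype (PW n) := Fintype.ofFinite _

noncomputable def kN (n : ℕ) : ℕ := Nat.card (MT n)

lemma kN_zero : kN 0 = 1 := by
  have : Unique (MT 0) := by
    refine ⟨⟨⟨[], by simp [MT]⟩⟩, ?_⟩
    rintro ⟨l, hl, _⟩
    apply Subtype.ext
    simpa using List.length_eq_zero_iff.1 hl
  exact Nat.card_unique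

lemma sum_lb {l : List ℤ} (hmem : ∀ x ∈ l, x ∈ SS)
    (hpre : ∀ i < l.length, 0 ≤ (l.take i).sum) : -2 ≤ l.sum := by
  rcases Nat.eq_zero_or_pos l.length with h0 | hpos
  · rw [List.length_eq_zero_iff.1 h0]; simp
  · have h1 : l.length - 1 < l.length := by omega
    have h2 := List.sum_take_succ l (l.length - 1) h1
    rw [show l.length - 1 + 1 = l.length by omega, List.take_length] at h2
    have h3 := hpre (l.length - 1) h1
    have h4 := SS_lb (hmem _ (List.getElem_mem h1))
    omega

lemma MT_mem {l : List ℤ} {n : ℕ} (hlen : l.length = n) (hmem : ∀ x ∈ l, x ∈ SS)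
    (hpre : ∀ i < l.length, 0 ≤ (l.take i).sum) (hs : 0 ≤ l.sum) :
    l.length = n ∧ (∀ x ∈ l, x ∈ ({-2, -1, 0, 1, 2} : Set ℤ)) ∧
      (∀ i : ℕ, 0 ≤ (l.take i).sum) := by
  refine ⟨hlen, hmem, ?_⟩
  intro i
  rcases lt_or_ge i l.length with h | h
  · exact hpre i h
  · rw [List.take_of_length_le h]; exact hs

noncomputable def partEquiv (n : ℕ) : PW n ≃ (MT n ⊕ (Wk 0 (-1) n ⊕ Wk 0 (-2) n)) where
  toFun w :=
    if h : 0 ≤ w.1.sum then Sum.inl ⟨w.1, MT_mem w.2.1 w.2.2.1 w.2.2.2 h⟩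
    else if h2 : w.1.sum = -1 then
      Sum.inr (Sum.inl ⟨w.1, ⟨w.2.1, w.2.2.1, fun i hi => by
        have := w.2.2.2 i hi; omega, by omega⟩⟩)
    else
      Sum.inr (Sum.inr ⟨w.1, ⟨w.2.1, w.2.2.1, fun i hi => by
        have := w.2.2.2 i hi; omega, by
          have := sum_lb w.2.2.1 w.2.2.2; omega⟩⟩)
  invFun := Sum.elim
    (fun u => ⟨u.1, u.2.1, u.2.2.1, fun i _ => u.2.2.2 i⟩)
    (Sum.elim
      (fun u => ⟨u.1, u.2.1, u.2.2.1, fun i hi => by have := u.2.2.2.1 i hi; omega⟩)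
      (fun u => ⟨u.1, u.2.1, u.2.2.1, fun i hi => by have := u.2.2.2.1 i hi; omega⟩))
  left_inv w := by
    by_cases h : 0 ≤ w.1.sum
    · simp only [dif_pos h]; rfl
    · by_cases h2 : w.1.sum = -1
      · simp only [dif_neg h, dif_pos h2]; rfl
      · simp only [dif_neg h, dif_neg h2]; rfl
  right_inv c := by
    rcases c with u | u | u
    · have h : 0 ≤ u.1.sum := by
        have := u.2.2.2 u.1.length
        rwa [List.take_length] at this
      simp only [Sum.elim_inl, dif_pos h]
      exact (dif_pos h).trans rfl
    · have h : u.1.sum = -1 := Wk_sum0 u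
      simp only [Sum.elim_inr, Sum.elim_inl, dif_neg (by omega : ¬ (0:ℤ) ≤ u.1.sum), dif_pos h]
      exact (dif_neg (by omega : ¬ (0:ℤ) ≤ u.1.sum)).trans ((dif_pos h).trans rfl)
    · have h : u.1.sum = -2 := Wk_sum0 u
      simp only [Sum.elim_inr, dif_neg (by omega : ¬ (0:ℤ) ≤ u.1.sum),
        dif_neg (by omega : ¬ u.1.sum = -1)]
      exact (dif_neg (by omega : ¬ (0:ℤ) ≤ u.1.sum)).trans
        ((dif_neg (by omega : ¬ u.1.sum = -1)).trans rfl)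

noncomputable def lastEquiv (n : ℕ) : PW (n + 1) ≃ MT n × ↥SF where
  toFun w :=
    have hne : w.1 ≠ [] := List.ne_nil_of_length_pos (by rw [w.2.1]; omega)
    (⟨w.1.dropLast, by
        have hlen : w.1.dropLast.length = n := by
          rw [List.length_dropLast, w.2.1]
          omega
        refine MT_mem hlen (fun y hy => w.2.2.1 y (List.dropLast_sublist w.1 |>.subset hy))
          ?_ ?_
        · intro i hi
          have hdt : w.1.dropLast.take i = w.1.take i := by
            rw [List.dropLast_eq_take, List.take_take, min_eq_left (by
              simp only [List.length_dropLast] at hi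
              omega)]
          rw [hdt]
          exact w.2.2.2 i (by rw [w.2.1]; omega)
        · have hdt : w.1.dropLast = w.1.take n := by
            rw [List.dropLast_eq_take, w.2.1]
            simp
          rw [hdt]
          exact w.2.2.2 n (by rw [w.2.1]; omega)⟩,
      ⟨w.1.getLast hne, mem_SF_iff.1 (w.2.2.1 _ (List.getLast_mem hne))⟩)
  invFun p := ⟨p.1.1 ++ [(p.2 : ℤ)], by
    refine ⟨by simp [p.1.2.1], ?_, ?_⟩
    · intro y hy
      rcases List.mem_append.1 hy with h | h
      · exact p.1.2.2.1 y h
      · rw [List.mem_singleton.1 h]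
        exact mem_SF_iff.2 p.2.2
    · intro i hi
      rw [List.take_append, List.sum_append,
        Nat.sub_eq_zero_of_le (by
          simp only [List.length_append, List.length_singleton, p.1.2.1] at hi
          rw [p.1.2.1]; omega)]
      simp
      exact p.1.2.2.2 i⟩
  left_inv w := Subtype.ext (List.dropLast_append_getLast _)
  right_inv p := by
    have h1 : (p.1.1 ++ [(p.2 : ℤ)]).dropLast = p.1.1 := List.dropLast_concat
    refine Prod.ext (Subtype.ext (by simpa using h1)) (Subtype.ext ?_)
    simp only
    rw [List.getLast_concat]

lemma kN_rec (n : ℕ) :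
    kN (n + 1) + fcN 0 (-1) (n + 1) + fcN 0 (-2) (n + 1) = 5 * kN n := by
  have h1 : Nat.card (PW (n + 1)) = kN n * 5 := by
    rw [Nat.card_congr (lastEquiv n), Nat.card_prod]
    congr 1
    rw [Nat.card_eq_fintype_card, Fintype.card_coe]
    rfl
  have h2 : Nat.card (PW (n + 1)) =
      kN (n + 1) + (fcN 0 (-1) (n + 1) + fcN 0 (-2) (n + 1)) := by
    rw [Nat.card_congr (partEquiv (n + 1)), Nat.card_sum, Nat.card_sum]
    rfl
  omega

noncomputable def Fse (m e : ℤ) : PowerSeries ℤ := PowerSeries.mk fun n => (fcN m e n : ℤ)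

lemma Fse_base_11 : Fse (-1) (-1) = 1 := by
  ext n
  rw [Fse, coeff_mk, PowerSeries.coeff_one]
  cases n with
  | zero => simp [fcN_zero]
  | succ n => simp [fcN_neg (-1) (-1) (by omega) (n + 1) (by omega)]

lemma Fse_base_12 : Fse (-1) (-2) = 0 := by
  ext n
  rw [Fse, coeff_mk]
  cases n with
  | zero => simp [fcN_zero]
  | succ n => simp [fcN_neg (-1) (-2) (by omega) (n + 1) (by omega)]

lemma Fse_base_21 : Fse (-2) (-1) = 0 := by
  ext n
  rw [Fse, coeff_mk]
  cases n with
  | zero => simp [fcN_zero]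
  | succ n => simp [fcN_neg (-2) (-1) (by omega) (n + 1) (by omega)]

lemma Fse_base_22 : Fse (-2) (-2) = 1 := by
  ext n
  rw [Fse, coeff_mk, PowerSeries.coeff_one]
  cases n with
  | zero => simp [fcN_zero]
  | succ n => simp [fcN_neg (-2) (-2) (by omega) (n + 1) (by omega)]

lemma Fse_split (m e : ℤ) (hm : 1 ≤ m) (he : e < 0) :
    Fse m e = Fse 0 (-1) * Fse (m - 1) e + Fse 0 (-2) * Fse (m - 2) e := by
  ext n
  rw [map_add, PowerSeries.coeff_mul, PowerSeries.coeff_mul,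
    Finset.Nat.sum_antidiagonal_eq_sum_range_succ_mk,
    Finset.Nat.sum_antidiagonal_eq_sum_range_succ_mk]
  simp only [Fse, coeff_mk]
  rw [← Finset.sum_add_distrib]
  have h := fcN_split m e hm he n
  rw [Fin.sum_univ_eq_sum_range
    (fun i => fcN 0 (-1) i * fcN (m - 1) e (n - i) + fcN 0 (-2) i * fcN (m - 2) e (n - i))
    (n + 1)] at h
  have h2 : ((fcN m e n : ℤ)) = ((∑ i ∈ Finset.range (n + 1),
      (fcN 0 (-1) i * fcN (m - 1) e (n - i) + fcN 0 (-2) i * fcN (m - 2) e (n - i)) : ℕ) : ℤ) := by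
    exact_mod_cast congrArg Nat.cast h
  rw [h2]
  push_cast
  rfl

lemma Fse_head (e : ℤ) (he : e ≠ 0) :
    Fse 0 e = X * (Fse (-2) e + Fse (-1) e + Fse 0 e + Fse 1 e + Fse 2 e) := by
  ext n
  cases n with
  | zero =>
    rw [PowerSeries.coeff_zero_X_mul, Fse, coeff_mk, fcN_zero]
    simp [he.symm]
  | succ n =>
    rw [PowerSeries.coeff_succ_X_mul]
    simp only [map_add, Fse, coeff_mk]
    have := fcN_head e n
    push_cast [this]
    ring

/-- The generating function for nonnegative meanders with step set
`{-2, -1, 0, 1, 2}`: the coefficient of `t^n` is the number of lists of `n`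
integers from that set, all of whose prefix sums are `≥ 0`. -/
noncomputable def meanderGF : PowerSeries ℤ :=
  PowerSeries.mk fun n =>
    (Nat.card {l : List ℤ //
      l.length = n ∧
      (∀ x ∈ l, x ∈ ({-2, -1, 0, 1, 2} : Set ℤ)) ∧
      (∀ i : ℕ, 0 ≤ (l.take i).sum)} : ℤ)

lemma coeff_meanderGF (n : ℕ) : (PowerSeries.coeff n) meanderGF = (kN n : ℤ) := by
  rw [meanderGF, coeff_mk]
  rfl

lemma constantCoeff_meanderGF : PowerSeries.constantCoeff meanderGF = 1 := by
  rw [← PowerSeries.coeff_zero_eq_constantCoeff, coeff_meanderGF, kN_zero]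
  norm_num

lemma hK_rel : (1 - 5 * X) * meanderGF = 1 - Fse 0 (-1) - Fse 0 (-2) := by
  have hexp : (1 - 5 * X) * meanderGF
      = meanderGF - PowerSeries.C (5 : ℤ) * (X * meanderGF) := by
    rw [map_ofNat]; ring
  rw [hexp]
  ext n
  simp only [map_sub, PowerSeries.coeff_C_mul, PowerSeries.coeff_one]
  cases n with
  | zero =>
    rw [PowerSeries.coeff_zero_X_mul, coeff_meanderGF, kN_zero]
    simp only [Fse, coeff_mk, fcN_zero]
    norm_num
  | succ n =>
    rw [PowerSeries.coeff_succ_X_mul, coeff_meanderGF, coeff_meanderGF]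
    simp only [Fse, coeff_mk]
    have h := kN_rec n
    have h0 : (if n + 1 = 0 then (1:ℤ) else 0) = 0 := by simp
    rw [h0]
    push_cast
    omega

lemma hA_rel : Fse 0 (-1) = X * (1 + Fse 0 (-1) + Fse 0 (-1) ^ 2 + Fse 0 (-2)
    + Fse 0 (-1) ^ 3 + 2 * Fse 0 (-1) * Fse 0 (-2)) := by
  have h1 := Fse_split 1 (-1) (by norm_num) (by norm_num)
  have h2 := Fse_split 2 (-1) (by norm_num) (by norm_num)
  have h3 := Fse_head (-1) (by norm_num)
  norm_num at h1 h2
  rw [Fse_base_11] at h1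
  rw [Fse_base_21, Fse_base_11] at h3
  linear_combination h3 + X * h2 + (X + X * Fse 0 (-1)) * h1

lemma hB_rel : Fse 0 (-2) = X * (1 + Fse 0 (-2) + Fse 0 (-1) * Fse 0 (-2)
    + Fse 0 (-1) ^ 2 * Fse 0 (-2) + Fse 0 (-2) ^ 2) := by
  have h1 := Fse_split 1 (-2) (by norm_num) (by norm_num)
  have h2 := Fse_split 2 (-2) (by norm_num) (by norm_num)
  have h3 := Fse_head (-2) (by norm_num)
  norm_num at h1 h2
  rw [Fse_base_12] at h1
  rw [Fse_base_22, Fse_base_12] at h3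
  linear_combination h3 + X * h2 + (X + X * Fse 0 (-1)) * h1

theorem meander_minimalPolynomial :
    X ^ 2 * (5 * X - 1) ^ 2 * meanderGF ^ 4 + X * (5 * X - 1) ^ 2 * meanderGF ^ 3
      + 3 * X * (5 * X - 1) * meanderGF ^ 2 + (5 * X - 1) * meanderGF + 1 = 0 := by
  set K := meanderGF with hKdef
  set A := Fse 0 (-1) with hAdef
  set B := Fse 0 (-2) with hBdef
  have hA : A = X * (1 + A + A ^ 2 + B + A ^ 3 + 2 * A * B) := hA_rel
  have hB : B = X * (1 + B + A * B + A ^ 2 * B + B ^ 2) := hB_rel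
  have hK : (1 - 5 * X) * K = 1 - A - B := hK_rel
  have hEP : (X ^ 3 * ((1 - 5 * X) ^ 3 * (1 + 5 * X * K - X * (1 - 5 * X) * K ^ 2))) *
      (X ^ 2 * (5 * X - 1) ^ 2 * K ^ 4 + X * (5 * X - 1) ^ 2 * K ^ 3
        + 3 * X * (5 * X - 1) * K ^ 2 + (5 * X - 1) * K + 1) = 0 := by
    linear_combination (X^3 - 10*X^4 + 6*X^4*K - 5*X^4*K^2 + 2*X^4*K^3 - X^4*A*K + X^4*A*K^2 - X^4*A^2*K + 25*X^5 - 60*X^5*K + 75*X^5*K^2 - 44*X^5*K^3 + 3*X^5*K^4 + 10*X^5*A*K - 15*X^5*A*K^2 + 4*X^5*A*K^3 - X^5*A*K^4 + 10*X^5*A^2*K - X^5*A^2*K^3 + 150*X^6*K - 375*X^6*K^2 + 360*X^6*K^3 - 60*X^6*K^4 - 25*X^6*A*K + 75*X^6*A*K^2 - 60*X^6*A*K^3 + 20*X^6*A*K^4 - 25*X^6*A^2*K + 15*X^6*A^2*K^3 + 625*X^7*K^2 - 1300*X^7*K^3 + 450*X^7*K^4 - 125*X^7*A*K^2 + 300*X^7*A*K^3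 - 150*X^7*A*K^4 - 75*X^7*A^2*K^3 + 1750*X^8*K^3 - 1500*X^8*K^4 - 500*X^8*A*K^3 + 500*X^8*A*K^4 + 125*X^8*A^2*K^3 + 1875*X^9*K^4 - 625*X^9*A*K^4) * hA + (X^3 - 10*X^4 + 6*X^4*K - 2*X^4*K^2 - X^4*A*K + 2*X^4*A*K^2 - X^4*A^2*K + 25*X^5 - 60*X^5*K + 30*X^5*K^2 - 4*X^5*K^3 + X^5*K^4 + 10*X^5*A*K - 30*X^5*A*K^2 + 4*X^5*A*K^3 + 10*X^5*A^2*K - X^5*A^2*K^3 + 150*X^6*K - 150*X^6*K^2 + 60*X^6*K^3 - 20*X^6*K^4 - 25*X^6*A*K + 150*X^6*A*K^2 - 60*X^6*A*K^3 - 25*X^6*A^2*K + 15*X^6*A^2*K^3 + 250*X^7*K^2 - 300*X^7*K^3 + 150*X^7*K^4 - 250*X^7*A*K^2 + 300*X^7*A*K^3 - 75*X^7*A^2*K^3 + 500*X^8*K^3 - 500*X^8*K^4 - 500*X^8*A*K^3 + 125*X^8*A^2*K^3 + 625*X^9*K^4) * hB + (- X^3 + 13*X^4 - 7*X^4*K +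 2*X^4*K^2 + X^4*B + 2*X^4*A + X^4*A*K - 2*X^4*A*K^2 + X^4*A^2 + X^4*A^2*K - 55*X^5 + 93*X^5*K - 45*X^5*K^2 + 8*X^5*K^3 - X^5*K^4 - 10*X^5*B + 6*X^5*B*K - 2*X^5*B*K^2 - 20*X^5*A - X^5*A*K + 26*X^5*A*K^2 - 2*X^5*A*K^3 - X^5*A*B*K + 2*X^5*A*B*K^2 - 10*X^5*A^2 - 9*X^5*A^2*K + X^5*A^2*K^2 + X^5*A^2*K^3 - X^5*A^2*B*K - 3*X^5*A^3*K + 2*X^5*A^3*K^2 - X^5*A^4*K + 75*X^6 - 405*X^6*K + 375*X^6*K^2 - 152*X^6*K^3 + 29*X^6*K^4 - X^6*K^5 + 25*X^6*B - 60*X^6*B*K + 30*X^6*B*K^2 - 4*X^6*B*K^3 + X^6*B*K^4 + 50*X^6*A - 65*X^6*A*K - 90*X^6*A*K^2 + 24*X^6*A*K^3 + X^6*A*K^4 + 10*X^6*A*B*K - 30*X^6*A*B*K^2 + 4*X^6*A*B*K^3 + 25*X^6*A^2 + 15*X^6*A^2*K - 15*X^6*A^2*K^2 - 14*X^6*A^2*K^3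 + 10*X^6*A^2*B*K - X^6*A^2*B*K^3 + 30*X^6*A^3*K - 30*X^6*A^3*K^2 + 2*X^6*A^3*K^3 + 10*X^6*A^4*K - X^6*A^4*K^3 + 575*X^7*K - 1375*X^7*K^2 + 1080*X^7*K^3 - 330*X^7*K^4 + 25*X^7*K^5 + 150*X^7*B*K - 150*X^7*B*K^2 + 60*X^7*B*K^3 - 20*X^7*B*K^4 + 225*X^7*A*K - 50*X^7*A*K^2 - 60*X^7*A*K^3 - 20*X^7*A*K^4 - 25*X^7*A*B*K + 150*X^7*A*B*K^2 - 60*X^7*A*B*K^3 + 25*X^7*A^2*K + 75*X^7*A^2*K^2 + 60*X^7*A^2*K^3 - 25*X^7*A^2*B*K + 15*X^7*A^2*B*K^3 - 75*X^7*A^3*K + 150*X^7*A^3*K^2 - 30*X^7*A^3*K^3 - 25*X^7*A^4*K + 15*X^7*A^4*K^3 + 1875*X^8*K^2 - 3400*X^8*K^3 + 1850*X^8*K^4 - 250*X^8*K^5 + 250*X^8*B*K^2 - 300*X^8*B*K^3 + 150*X^8*B*K^4 + 500*X^8*A*K^2 - 200*X^8*A*K^3 + 150*X^8*A*K^4 -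 250*X^8*A*B*K^2 + 300*X^8*A*B*K^3 - 125*X^8*A^2*K^2 - 50*X^8*A^2*K^3 - 75*X^8*A^2*B*K^3 - 250*X^8*A^3*K^2 + 150*X^8*A^3*K^3 - 75*X^8*A^4*K^3 + 4000*X^9*K^3 - 5125*X^9*K^4 + 1250*X^9*K^5 + 500*X^9*B*K^3 - 500*X^9*B*K^4 + 750*X^9*A*K^3 - 500*X^9*A*K^4 - 500*X^9*A*B*K^3 - 125*X^9*A^2*K^3 + 125*X^9*A^2*B*K^3 - 250*X^9*A^3*K^3 + 125*X^9*A^4*K^3 + 5625*X^10*K^4 - 3125*X^10*K^5 + 625*X^10*B*K^4 + 625*X^10*A*K^4 + 3125*X^11*K^5) * hK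
  have hX3 : (X : PowerSeries ℤ) ^ 3 ≠ 0 := pow_ne_zero _ PowerSeries.X_ne_zero
  have hU : ((1 - 5 * X) ^ 3 * (1 + 5 * X * K - X * (1 - 5 * X) * K ^ 2)) ≠ 0 := by
    intro h
    have hc := congrArg (PowerSeries.constantCoeff (R := ℤ)) h
    rw [hKdef] at hc
    simp [constantCoeff_meanderGF] at hc
  rcases mul_eq_zero.mp hEP with h | h
  · rcases mul_eq_zero.mp h with h' | h'
    · exact absurd h' hX3
    · exact absurd h' hU
  · exact h
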